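/- arXiv:2407.08881 — 5 statements merged into one kernel-verified Lean document; each statement's English description precedes it below -/
import Mathlib

section
/- For every positive integer N, the sum over all divisors d of N of φ(gcd(d, N/d)) is at most 2^{ω(N)} · √N, as real numbers. -/
open Finset

private lemma gcdPowMin (p i j : ℕ) : Nat.gcd (p ^ i) (p ^ j) = p ^ min i j := by
  rcases le_total i j with h | h
  · rw [Nat.gcd_eq_left (pow_dvd_pow p h), min_eq_left h]
  · rw [Nat.gcd_eq_right (pow_dvd_pow p h), min_eq_right h]

private lemma totSumPow {p : ℕ} (hp : p.Prime) (m : ℕ) :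
    ∑ i ∈ range (m + 1), (p ^ i).totient = p ^ m := by
  rw [← Nat.sum_divisors_prime_pow hp]
  exact Nat.sum_totient _

private def Fgcd (N : ℕ) : ℕ := ∑ d ∈ N.divisors, (Nat.gcd d (N / d)).totient

private lemma gcd_key {m n a b : ℕ} (h : Nat.Coprime m n) (ha : a ∣ m) (hb : b ∣ n) :
    Nat.gcd (a * b) (m * n / (a * b)) = Nat.gcd a (m / a) * Nat.gcd b (n / b) := by
  have hx : m / a ∣ m := Nat.div_dvd_of_dvd ha
  have hy : n / b ∣ n := Nat.div_dvd_of_dvd hb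
  have hdiv : m * n / (a * b) = (m / a) * (n / b) := (Nat.div_mul_div_comm ha hb).symm
  have hxy : Nat.Coprime (m / a) (n / b) := (h.coprime_dvd_left hx).coprime_dvd_right hy
  have hbx : Nat.Coprime b (m / a) := (h.symm.coprime_dvd_left hb).coprime_dvd_right hx
  have hay : Nat.Coprime a (n / b) := (h.coprime_dvd_left ha).coprime_dvd_right hy
  rw [hdiv, Nat.Coprime.gcd_mul _ hxy, Nat.Coprime.gcd_mul_right_cancel a hbx,
    Nat.Coprime.gcd_mul_left_cancel b hay]

private lemma Fgcd_mul {m n : ℕ} (hm : m ≠ 0) (hn : n ≠ 0) (h : Nat.Coprime m n) :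
    Fgcd (m * n) = Fgcd m * Fgcd n := by
  unfold Fgcd
  rw [Finset.sum_mul_sum, ← Finset.sum_product']
  refine (Finset.sum_nbij' (i := fun p : ℕ × ℕ => p.1 * p.2)
    (j := fun d => (Nat.gcd d m, Nat.gcd d n)) ?_ ?_ ?_ ?_ ?_).symm
  · rintro ⟨a, b⟩ hab
    simp only [Finset.mem_product, Nat.mem_divisors] at hab
    exact Nat.mem_divisors.mpr ⟨mul_dvd_mul hab.1.1 hab.2.1, mul_ne_zero hm hn⟩
  · intro d hd
    rw [Nat.mem_divisors] at hd
    simp only [Finset.mem_product, Nat.mem_divisors]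
    exact ⟨⟨Nat.gcd_dvd_right d m, hm⟩, ⟨Nat.gcd_dvd_right d n, hn⟩⟩
  · rintro ⟨a, b⟩ hab
    simp only [Finset.mem_product, Nat.mem_divisors] at hab
    have h1 : Nat.gcd (a * b) m = a := by
      rw [Nat.Coprime.gcd_mul_right_cancel a ((h.symm.coprime_dvd_left hab.2.1)),
        Nat.gcd_eq_left hab.1.1]
    have h2 : Nat.gcd (a * b) n = b := by
      rw [Nat.Coprime.gcd_mul_left_cancel b ((h.coprime_dvd_left hab.1.1)),
        Nat.gcd_eq_left hab.2.1]
    simp [h1, h2]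
  · intro d hd
    rw [Nat.mem_divisors] at hd
    exact (Nat.gcd_mul_gcd_eq_iff_dvd_mul_of_coprime h).mpr hd.1
  · rintro ⟨a, b⟩ hab
    simp only [Finset.mem_product, Nat.mem_divisors] at hab
    have hg1 : Nat.gcd a (m / a) ∣ m := (Nat.gcd_dvd_left _ _).trans hab.1.1
    have hg2 : Nat.gcd b (n / b) ∣ n := (Nat.gcd_dvd_left _ _).trans hab.2.1
    rw [gcd_key h hab.1.1 hab.2.1,
      Nat.totient_mul ((h.coprime_dvd_left hg1).coprime_dvd_right hg2)]

private lemma Fgcd_prime_pow {p k : ℕ} (hp : p.Prime) (hk : 1 ≤ k) :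
    Fgcd (p ^ k) = p ^ (k / 2) + p ^ ((k - 1) / 2) := by
  unfold Fgcd
  rw [Nat.sum_divisors_prime_pow hp]
  have hmin : ∀ i ∈ range (k + 1),
      (Nat.gcd (p ^ i) (p ^ k / p ^ i)).totient = (p ^ min i (k - i)).totient := by
    intro i hi
    rw [mem_range] at hi
    rw [Nat.pow_div (by omega) hp.pos, gcdPowMin]
  rw [Finset.sum_congr rfl hmin]
  have hsplit : range (k + 1) = Finset.Ico 0 (k / 2 + 1) ∪ Finset.Ico (k / 2 + 1) (k + 1) := by
    rw [Finset.Ico_union_Ico_eq_Ico (by omega) (by omega), Finset.range_eq_Ico]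
  rw [hsplit, Finset.sum_union (by
    apply Finset.Ico_disjoint_Ico_consecutive)]
  have h1 : ∑ i ∈ Finset.Ico 0 (k / 2 + 1), (p ^ min i (k - i)).totient = p ^ (k / 2) := by
    rw [← totSumPow hp (k / 2), Finset.range_eq_Ico]
    refine Finset.sum_congr rfl fun i hi => ?_
    rw [Finset.mem_Ico] at hi
    have : min i (k - i) = i := by omega
    rw [this]
  have h2 : ∑ i ∈ Finset.Ico (k / 2 + 1) (k + 1), (p ^ min i (k - i)).totient
      = p ^ ((k - 1) / 2) := by
    rw [← totSumPow hp ((k - 1) / 2)]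
    refine Finset.sum_nbij' (i := fun i => k - i) (j := fun j => k - j) ?_ ?_ ?_ ?_ ?_
    · intro a ha; rw [Finset.mem_Ico] at ha; rw [mem_range]; omega
    · intro a ha; rw [mem_range] at ha; rw [Finset.mem_Ico]; omega
    · intro a ha; rw [Finset.mem_Ico] at ha; omega
    · intro a ha; rw [mem_range] at ha; omega
    · intro a ha; rw [Finset.mem_Ico] at ha
      have : min a (k - a) = k - a := by omega
      rw [this]
  rw [h1, h2]

private lemma sqrt_cast_prod {α : Type*} (s : Finset α) (f : α → ℕ) :
    Real.sqrt (∏ i ∈ s, (f i : ℝ)) = ∏ i ∈ s, Real.sqrt (f i) := by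
  classical
  induction s using Finset.cons_induction with
  | empty => simp
  | cons a s ha ih =>
    rw [Finset.prod_cons, Finset.prod_cons, Real.sqrt_mul (by positivity), ih]

private lemma Fgcd_prime_pow_le {p k : ℕ} (hp : p.Prime) (hk : 1 ≤ k) :
    (Fgcd (p ^ k) : ℝ) ≤ 2 * Real.sqrt ((p : ℝ) ^ k) := by
  rw [Fgcd_prime_pow hp hk]
  have hp0 : (0 : ℝ) ≤ (p : ℝ) := by positivity
  have hsq : Real.sqrt ((p : ℝ) ^ k) = Real.sqrt p ^ k := by
    rw [show ((p : ℝ)) ^ k = (Real.sqrt p ^ k) ^ 2 by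
      rw [← pow_mul, mul_comm, pow_mul, Real.sq_sqrt hp0]]
    exact Real.sqrt_sq (by positivity)
  have h1le : (1 : ℝ) ≤ Real.sqrt p := by
    rw [show (1 : ℝ) = Real.sqrt 1 by simp]
    exact Real.sqrt_le_sqrt (by exact_mod_cast hp.one_lt.le)
  have key : ∀ m : ℕ, 2 * m ≤ k → ((p : ℝ)) ^ m ≤ Real.sqrt p ^ k := by
    intro m hm
    calc ((p : ℝ)) ^ m = Real.sqrt p ^ (2 * m) := by
          rw [pow_mul, Real.sq_sqrt hp0]
      _ ≤ Real.sqrt p ^ k := pow_le_pow_right₀ h1le hm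
  rw [hsq]
  push_cast
  have A := key (k / 2) (by omega)
  have B := key ((k - 1) / 2) (by omega)
  linarith

private def FgcdAF : ArithmeticFunction ℕ :=
  ⟨Fgcd, by simp [Fgcd]⟩

private lemma FgcdAF_isMult : FgcdAF.IsMultiplicative := by
  constructor
  · show Fgcd 1 = 1
    simp [Fgcd, Nat.divisors_one]
  · intro m n h
    show Fgcd (m * n) = Fgcd m * Fgcd n
    rcases eq_or_ne m 0 with rfl | hm
    · rw [Nat.coprime_zero_left] at h; subst h; simp [Fgcd]
    rcases eq_or_ne n 0 with rfl | hn
    · rw [Nat.coprime_zero_right] at h; subst h; simp [Fgcd]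
    exact Fgcd_mul hm hn h

/-- For every positive integer `N`, `∑_{d ∣ N} φ(gcd(d, N/d)) ≤ 2^{ω(N)} · √N`,
as real numbers. -/
theorem sum_totient_gcd_le (N : ℕ) (hN : 0 < N) :
    ((∑ d ∈ N.divisors, (Nat.gcd d (N / d)).totient : ℕ) : ℝ)
      ≤ 2 ^ N.primeFactors.card * Real.sqrt N := by
  have hne : N ≠ 0 := hN.ne'
  show (Fgcd N : ℝ) ≤ _
  have hfact : Fgcd N = ∏ p ∈ N.primeFactors, Fgcd (p ^ N.factorization p) := by
    have h := FgcdAF_isMult.multiplicative_factorization FgcdAF hne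
    simpa [FgcdAF, Finsupp.prod, Nat.support_factorization] using h
  rw [hfact]
  push_cast
  calc ∏ p ∈ N.primeFactors, (Fgcd (p ^ N.factorization p) : ℝ)
      ≤ ∏ p ∈ N.primeFactors, (2 * Real.sqrt ((p : ℝ) ^ N.factorization p)) := by
        apply Finset.prod_le_prod
        · intro i _; positivity
        · intro p hp
          exact Fgcd_prime_pow_le (Nat.prime_of_mem_primeFactors hp)
            (Nat.Prime.factorization_pos_of_dvd (Nat.prime_of_mem_primeFactors hp) hne
              (Nat.dvd_of_mem_primeFactors hp))
    _ = 2 ^ N.primeFactors.card * Real.sqrt N := by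
        rw [Finset.prod_mul_distrib, Finset.prod_const]
        congr 1
        have hc : ∀ p ∈ N.primeFactors,
            Real.sqrt ((p : ℝ) ^ N.factorization p)
              = Real.sqrt (((p ^ N.factorization p : ℕ) : ℝ)) := by
          intro p _; push_cast; rfl
        have hNprod : ∏ p ∈ N.primeFactors, p ^ N.factorization p = N := by
          rw [← Nat.support_factorization]
          exact Nat.factorization_prod_pow_eq_self hne
        rw [Finset.prod_congr rfl hc, ← sqrt_cast_prod, ← Nat.cast_prod, hNprod]
end

section
/- For every positive integer N, ν(N) ≤ 21.234 · N^{1/16}, as real numbers. -/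
private lemma le_rpow16 (x y : ℝ) (hx : 0 ≤ x) (h : x ^ (16:ℕ) ≤ y) :
    x ≤ y ^ ((1:ℝ)/16) := by
  calc x = (x ^ (16:ℕ)) ^ ((1:ℝ)/16) := by
        rw [← Real.rpow_natCast x 16, ← Real.rpow_mul hx]; norm_num
    _ ≤ y ^ ((1:ℝ)/16) := Real.rpow_le_rpow (pow_nonneg hx 16) h (by norm_num)

private lemma rpow16_le (x y : ℝ) (hx : 0 ≤ x) (hy : 0 ≤ y) (h : y ≤ x ^ (16:ℕ)) :
    y ^ ((1:ℝ)/16) ≤ x := by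
  calc y ^ ((1:ℝ)/16) ≤ (x ^ (16:ℕ)) ^ ((1:ℝ)/16) :=
        Real.rpow_le_rpow hy h (by norm_num)
    _ = x := by rw [← Real.rpow_natCast x 16, ← Real.rpow_mul hx]; norm_num




/-- Let `ν` be the multiplicative arithmetic function with `ν(2^r) = 4` and
`ν(p^r) = 1 + 2/(p-2)` for odd primes `p` (and all `r ≥ 1`). Then for every
positive integer `N`, `ν(N) ≤ 21.234 · N^{1/16}` as real numbers. -/
theorem nu_le (ν : ArithmeticFunction ℚ) (hν : ν.IsMultiplicative)
    (hν2 : ∀ r : ℕ, 1 ≤ r → ν (2 ^ r) = 4)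
    (hνp : ∀ p r : ℕ, p.Prime → p ≠ 2 → 1 ≤ r → ν (p ^ r) = 1 + 2 / ((p : ℚ) - 2))
    (N : ℕ) (hN : 0 < N) :
    ((ν N : ℚ) : ℝ) ≤ 21.234 * (N : ℝ) ^ ((1 : ℝ) / 16) := by
  classical
  have hN0 : N ≠ 0 := hN.ne'
  set B : Finset ℕ := {2, 3, 5, 7, 11, 13} with hB
  set S := N.primeFactors with hS
  set k := N.factorization with hk
  -- ν at prime powers equals ν at the prime
  have hval : ∀ p r : ℕ, p.Prime → 1 ≤ r → ν (p ^ r) = ν p := by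
    intro p r hp hr
    by_cases h2 : p = 2
    · subst h2; rw [hν2 r hr]; rw [show (2:ℕ) = 2 ^ 1 by norm_num, hν2 1 le_rfl]
    · rw [hνp p r hp h2 hr]
      conv_rhs => rw [← pow_one p]
      rw [hνp p 1 hp h2 le_rfl]
  have hpos : ∀ p : ℕ, p.Prime → (0:ℝ) < ((ν p : ℚ) : ℝ) := by
    intro p hp
    by_cases h2 : p = 2
    · subst h2; rw [show (2:ℕ) = 2 ^ 1 by norm_num, hν2 1 le_rfl]; norm_num
    · conv_rhs => rw [← pow_one p]
      rw [hνp p 1 hp h2 le_rfl]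
      have h3 : 3 ≤ p := by
        rcases hp.two_le.lt_or_eq with h | h
        · omega
        · omega
      have h3' : (3:ℝ) ≤ (p:ℝ) := by exact_mod_cast h3
      push_cast
      have : (0:ℝ) < (p:ℝ) - 2 := by linarith
      positivity
  -- the per-prime constant
  set c : ℕ → ℝ := fun p => if p ∈ B then ((ν p : ℚ) : ℝ) / (p:ℝ) ^ ((1:ℝ)/16) else 1
    with hc
  have hprimeB : ∀ p ∈ B, p.Prime := by decide
  have hcge1 : ∀ p ∈ B, 1 ≤ c p := by
    intro p hpB
    have hp := hprimeB p hpB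
    have hppos : (0:ℝ) < (p:ℝ) ^ ((1:ℝ)/16) :=
      Real.rpow_pos_of_pos (by exact_mod_cast hp.pos) _
    rw [hc]; simp only [if_pos hpB]
    rw [le_div_iff₀ hppos, one_mul]
    refine rpow16_le _ _ (hpos p hp).le (by positivity) ?_
    fin_cases hpB
    · rw [show (2:ℕ) = 2 ^ 1 by norm_num, hν2 1 le_rfl]; norm_num
    · conv_lhs => rw [show ((3:ℕ):ℝ) = ((3:ℕ):ℝ) by norm_num]
      rw [show (3:ℕ) = 3 ^ 1 by norm_num, hνp 3 1 (by norm_num) (by norm_num) le_rfl]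
      norm_num
    · rw [show (5:ℕ) = 5 ^ 1 by norm_num, hνp 5 1 (by norm_num) (by norm_num) le_rfl]
      norm_num
    · rw [show (7:ℕ) = 7 ^ 1 by norm_num, hνp 7 1 (by norm_num) (by norm_num) le_rfl]
      norm_num
    · rw [show (11:ℕ) = 11 ^ 1 by norm_num, hνp 11 1 (by norm_num) (by norm_num) le_rfl]
      norm_num
    · rw [show (13:ℕ) = 13 ^ 1 by norm_num, hνp 13 1 (by norm_num) (by norm_num) le_rfl]
      norm_num
  -- evaluate the constant product over B
  have hνval : ∀ p : ℕ, p.Prime → p ≠ 2 → ((ν p : ℚ) : ℝ) = 1 + 2 / ((p:ℝ) - 2) := by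
    intro p hp h2
    conv_lhs => rw [← pow_one p]
    rw [hνp p 1 hp h2 le_rfl]
    push_cast
    ring
  have hν2' : ((ν 2 : ℚ) : ℝ) = 4 := by
    have h := hν2 1 le_rfl
    rw [pow_one] at h
    rw [h]; norm_num
  have hcB : ∏ p ∈ B, c p ≤ 21.234 := by
    have h2 : c 2 = 4 / (2:ℝ) ^ ((1:ℝ)/16) := by
      rw [hc]; simp only [if_pos (by decide : 2 ∈ B)]; rw [hν2']; norm_num
    have h3 : c 3 = 3 / (3:ℝ) ^ ((1:ℝ)/16) := by
      rw [hc]; simp only [if_pos (by decide : 3 ∈ B)]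
      rw [hνval 3 (by norm_num) (by norm_num)]; norm_num
    have h5 : c 5 = (5/3) / (5:ℝ) ^ ((1:ℝ)/16) := by
      rw [hc]; simp only [if_pos (by decide : 5 ∈ B)]
      rw [hνval 5 (by norm_num) (by norm_num)]; norm_num
    have h7 : c 7 = (7/5) / (7:ℝ) ^ ((1:ℝ)/16) := by
      rw [hc]; simp only [if_pos (by decide : 7 ∈ B)]
      rw [hνval 7 (by norm_num) (by norm_num)]; norm_num
    have h11 : c 11 = (11/9) / (11:ℝ) ^ ((1:ℝ)/16) := by
      rw [hc]; simp only [if_pos (by decide : 11 ∈ B)]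
      rw [hνval 11 (by norm_num) (by norm_num)]; norm_num
    have h13 : c 13 = (13/11) / (13:ℝ) ^ ((1:ℝ)/16) := by
      rw [hc]; simp only [if_pos (by decide : 13 ∈ B)]
      rw [hνval 13 (by norm_num) (by norm_num)]; norm_num
    have hBprod : ∏ p ∈ B, c p = c 2 * c 3 * c 5 * c 7 * c 11 * c 13 := by
      rw [hB]
      rw [Finset.prod_insert (by decide), Finset.prod_insert (by decide),
        Finset.prod_insert (by decide), Finset.prod_insert (by decide),
        Finset.prod_insert (by decide), Finset.prod_singleton]
      ring
    have hmulr : ∀ a b : ℝ, 0 ≤ a → 0 ≤ b →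
        a ^ ((1:ℝ)/16) * b ^ ((1:ℝ)/16) = (a*b) ^ ((1:ℝ)/16) :=
      fun a b ha hb => (Real.mul_rpow ha hb).symm
    have hts : (2:ℝ) ^ ((1:ℝ)/16) * 3 ^ ((1:ℝ)/16) * 5 ^ ((1:ℝ)/16) * 7 ^ ((1:ℝ)/16)
        * 11 ^ ((1:ℝ)/16) * 13 ^ ((1:ℝ)/16) = (30030:ℝ) ^ ((1:ℝ)/16) := by
      rw [hmulr 2 3 (by norm_num) (by norm_num),
        hmulr (2*3) 5 (by norm_num) (by norm_num),
        hmulr (2*3*5) 7 (by norm_num) (by norm_num),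
        hmulr (2*3*5*7) 11 (by norm_num) (by norm_num),
        hmulr (2*3*5*7*11) 13 (by norm_num) (by norm_num)]
      norm_num
    have hP : (0:ℝ) < (30030:ℝ) ^ ((1:ℝ)/16) := Real.rpow_pos_of_pos (by norm_num) _
    have hkey : (364/(9*21.234) : ℝ) ≤ (30030:ℝ) ^ ((1:ℝ)/16) :=
      le_rpow16 _ _ (by norm_num) (by norm_num)
    rw [hBprod, h2, h3, h5, h7, h11, h13]
    have e1 : (4:ℝ) / 2 ^ ((1:ℝ)/16) * (3 / 3 ^ ((1:ℝ)/16)) * (5/3 / 5 ^ ((1:ℝ)/16))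
        * (7/5 / 7 ^ ((1:ℝ)/16)) * (11/9 / 11 ^ ((1:ℝ)/16)) * (13/11 / 13 ^ ((1:ℝ)/16))
        = (364/9) / ((2:ℝ) ^ ((1:ℝ)/16) * 3 ^ ((1:ℝ)/16) * 5 ^ ((1:ℝ)/16) * 7 ^ ((1:ℝ)/16)
          * 11 ^ ((1:ℝ)/16) * 13 ^ ((1:ℝ)/16)) := by
      field_simp
      ring
    rw [e1, hts, div_le_iff₀ hP]
    have := mul_le_mul_of_nonneg_left hkey (by norm_num : (0:ℝ) ≤ 21.234)
    calc (364/9 : ℝ) = 21.234 * (364/(9*21.234)) := by norm_num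
      _ ≤ 21.234 * (30030:ℝ) ^ ((1:ℝ)/16) := this
  -- factorization rewrites
  have hfact : ((ν N : ℚ) : ℝ) = ∏ p ∈ S, ((ν (p ^ k p) : ℚ) : ℝ) := by
    rw [hν.multiplicative_factorization ν hN0, Finsupp.prod]
    push_cast
    rfl
  have hNprod : (N:ℝ) = ∏ p ∈ S, ((p:ℝ) ^ (k p)) := by
    conv_lhs => rw [← Nat.factorization_prod_pow_eq_self hN0]
    rw [Finsupp.prod]
    push_cast
    rfl
  have hrpow : (N:ℝ) ^ ((1:ℝ)/16) = ∏ p ∈ S, ((p:ℝ) ^ (k p)) ^ ((1:ℝ)/16) := by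
    rw [hNprod, ← Real.finset_prod_rpow _ _ (fun p _ => by positivity)]
  -- termwise bound
  have hterm : ∀ p ∈ S, ((ν (p ^ k p) : ℚ) : ℝ) ≤ c p * ((p:ℝ) ^ (k p)) ^ ((1:ℝ)/16) := by
    intro p hpS
    have hp : p.Prime := Nat.prime_of_mem_primeFactors hpS
    have hr : 1 ≤ k p := by
      exact Nat.Prime.factorization_pos_of_dvd hp hN0 (Nat.dvd_of_mem_primeFactors hpS)
    have hple : (p:ℝ) ≤ (p:ℝ) ^ (k p) := by
      calc (p:ℝ) = (p:ℝ) ^ 1 := (pow_one _).symm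
        _ ≤ (p:ℝ) ^ (k p) := pow_le_pow_right₀ (by exact_mod_cast hp.one_lt.le) hr
    rw [hval p (k p) hp hr]
    by_cases hpB : p ∈ B
    · rw [hc]; simp only [if_pos hpB]
      have hppos : (0:ℝ) < (p:ℝ) ^ ((1:ℝ)/16) :=
        Real.rpow_pos_of_pos (by exact_mod_cast hp.pos) _
      rw [div_mul_eq_mul_div, le_div_iff₀ hppos]
      exact mul_le_mul_of_nonneg_left
        (Real.rpow_le_rpow (by positivity) hple (by norm_num)) (hpos p hp).le
    · rw [hc]; simp only [if_neg hpB, one_mul]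
      have h17 : 17 ≤ p := by
        by_contra hlt
        push_neg at hlt
        have h2 := hp.two_le
        interval_cases p <;> revert hp hpB <;> decide
      have h2 : p ≠ 2 := by omega
      rw [hνval p hp h2]
      have h17' : (17:ℝ) ≤ (p:ℝ) := by exact_mod_cast h17
      have hb : (1 + 2 / ((p:ℝ) - 2)) ≤ 17/15 := by
        have h15 : (15:ℝ) ≤ (p:ℝ) - 2 := by linarith
        have := div_le_div_of_nonneg_left (by norm_num : (0:ℝ) ≤ 2)
          (by norm_num : (0:ℝ) < 15) h15
        linarith [this]
      refine hb.trans (le_rpow16 _ _ (by norm_num) ?_)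
      calc ((17:ℝ)/15) ^ (16:ℕ) ≤ 17 := by norm_num
        _ ≤ (p:ℝ) := h17'
        _ ≤ (p:ℝ) ^ (k p) := hple
  -- assemble
  rw [hfact, hrpow]
  have hnn : ∀ p ∈ S, (0:ℝ) ≤ ((ν (p ^ k p) : ℚ) : ℝ) := by
    intro p hpS
    have hp : p.Prime := Nat.prime_of_mem_primeFactors hpS
    have hr : 1 ≤ k p := by
      exact Nat.Prime.factorization_pos_of_dvd hp hN0 (Nat.dvd_of_mem_primeFactors hpS)
    rw [hval p (k p) hp hr]
    exact (hpos p hp).le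
  calc ∏ p ∈ S, ((ν (p ^ k p) : ℚ) : ℝ)
      ≤ ∏ p ∈ S, (c p * ((p:ℝ) ^ (k p)) ^ ((1:ℝ)/16)) :=
        Finset.prod_le_prod hnn hterm
    _ = (∏ p ∈ S, c p) * ∏ p ∈ S, ((p:ℝ) ^ (k p)) ^ ((1:ℝ)/16) :=
        Finset.prod_mul_distrib
    _ ≤ 21.234 * ∏ p ∈ S, ((p:ℝ) ^ (k p)) ^ ((1:ℝ)/16) := by
        refine mul_le_mul_of_nonneg_right ?_
          (Finset.prod_nonneg fun p _ => by positivity)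
        -- ∏ p ∈ S, c p ≤ 21.234
        have hsplit : ∏ p ∈ S, c p = ∏ p ∈ S.filter (· ∈ B), c p := by
          rw [Finset.prod_filter]
          refine Finset.prod_congr rfl fun p _ => ?_
          by_cases hpB : p ∈ B
          · rw [if_pos hpB]
          · rw [if_neg hpB, hc]; simp only [if_neg hpB]
        rw [hsplit]
        have hTB : S.filter (· ∈ B) ⊆ B := fun x hx => (Finset.mem_filter.mp hx).2
        calc ∏ p ∈ S.filter (· ∈ B), c p
            ≤ (∏ p ∈ B \ S.filter (· ∈ B), c p) * ∏ p ∈ S.filter (· ∈ B), c p := by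
              refine le_mul_of_one_le_left
                (Finset.prod_nonneg fun p hp =>
                  (zero_le_one.trans (hcge1 p (hTB hp)))) ?_
              calc (1:ℝ) = ∏ p ∈ B \ S.filter (· ∈ B), 1 := by
                    rw [Finset.prod_const_one]
                _ ≤ ∏ p ∈ B \ S.filter (· ∈ B), c p :=
                    Finset.prod_le_prod (fun _ _ => zero_le_one)
                      (fun p hp => hcge1 p (Finset.mem_sdiff.mp hp).1)
          _ = ∏ p ∈ B, c p := Finset.prod_sdiff hTB
          _ ≤ 21.234 := hcB
end

section
/- Let β be the multiplicative arithmetic function determined by β(1) = 1 and, for every prime p, β(p) = −2, β(p^2) = 1, and β(p^r) = 0 for r ≥ 3. Let f be a positive integer and define ψ_f(n) := ψ(f·n)/ψ(f), a rational-valued arithmetic function. Then for every prime p: if p does not divide f, then (β * ψ_f)(p) = p − 1, (β * ψ_f)(p^2) = p^2 − p − 1, and (β * ψ_f)(p^r) = p^r − p^{r−1} − p^{r−2} + p^{r−3} for every r ≥ 3; and if p divides f, then (β * ψ_f)(p) = p − 2 and (β * ψ_f)(p^r) = p^r − 2p^{r−1} + p^{r−2} for every r ≥ 2. -/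
/-- The rational-valued arithmetic function `ψ(n) = n · ∏_{p ∣ n} (1 + 1/p)`. -/
noncomputable def psi : ArithmeticFunction ℚ :=
  ⟨fun n => (n : ℚ) * ∏ p ∈ n.primeFactors, (1 + 1 / (p : ℚ)), by simp⟩

/-- Given a positive integer `f`, the arithmetic function `ψ_f(n) := ψ(f·n)/ψ(f)`. -/
noncomputable def psiSub (f : ℕ) : ArithmeticFunction ℚ :=
  ⟨fun n => psi (f * n) / psi f, by simp⟩

theorem psi_apply (n : ℕ) : psi n = (n : ℚ) * ∏ p ∈ n.primeFactors, (1 + 1 / (p : ℚ)) := rfl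

theorem conv_pp (f g : ArithmeticFunction ℚ) (p r : ℕ) (hp : p.Prime) :
    (f * g) (p^r) = ∑ i ∈ Finset.range (r+1), f (p^i) * g (p^(r-i)) := by
  rw [ArithmeticFunction.mul_apply, Nat.sum_divisorsAntidiagonal (fun x y => f x * g y),
    Nat.sum_divisors_prime_pow hp]
  refine Finset.sum_congr rfl fun i hi => ?_
  simp only [Finset.mem_range, Nat.lt_succ_iff] at hi
  rw [Nat.pow_div hi hp.pos]

theorem psi_pos (n : ℕ) (hn : 0 < n) : 0 < psi n := by
  rw [psi_apply]
  apply mul_pos (by exact_mod_cast hn)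
  apply Finset.prod_pos
  intro p hp
  have := (Nat.prime_of_mem_primeFactors hp).pos
  positivity

theorem psiSub_pp_dvd (f : ℕ) (hf : 0 < f) (p k : ℕ) (hp : p.Prime) (hk : k ≠ 0)
    (hd : p ∣ f) : psiSub f (p ^ k) = (p : ℚ) ^ k := by
  have hne : psi f ≠ 0 := (psi_pos f hf).ne'
  show psi (f * p ^ k) / psi f = _
  have h1 : (f * p ^ k).primeFactors = f.primeFactors := by
    rw [Nat.primeFactors_mul hf.ne' (pow_ne_zero k hp.pos.ne'),
      Nat.primeFactors_prime_pow hk hp, Finset.union_eq_left]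
    simpa using Nat.mem_primeFactors.mpr ⟨hp, hd, hf.ne'⟩
  rw [psi_apply, h1, psi_apply]
  push_cast
  field_simp

theorem psiSub_pp_not_dvd (f : ℕ) (hf : 0 < f) (p k : ℕ) (hp : p.Prime) (hk : k ≠ 0)
    (hd : ¬ p ∣ f) : psiSub f (p ^ k) = (p : ℚ) ^ k * (1 + 1 / p) := by
  have hne : psi f ≠ 0 := (psi_pos f hf).ne'
  show psi (f * p ^ k) / psi f = _
  have hpf : p ∉ f.primeFactors := fun h => hd (Nat.mem_primeFactors.mp h).2.1
  have h1 : (f * p ^ k).primeFactors = insert p f.primeFactors := by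
    rw [Nat.primeFactors_mul hf.ne' (pow_ne_zero k hp.pos.ne'),
      Nat.primeFactors_prime_pow hk hp]
    ext q; simp [Finset.mem_union, or_comm, Finset.mem_insert]
  rw [psi_apply, h1, Finset.prod_insert hpf, psi_apply]
  push_cast
  have hp0 : (p : ℚ) ≠ 0 := by exact_mod_cast hp.pos.ne'
  field_simp

theorem psiSub_one' (f : ℕ) (hf : 0 < f) : psiSub f 1 = 1 := by
  have hne : psi f ≠ 0 := (psi_pos f hf).ne'
  show psi (f * 1) / psi f = 1
  rw [mul_one, div_self hne]

theorem conv3 (β g : ArithmeticFunction ℚ) (h1 : β 1 = 1) (p r : ℕ) (hp : p.Prime)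
    (hb1 : β p = -2) (hb2 : β (p ^ 2) = 1) (hb3 : ∀ i, 3 ≤ i → β (p ^ i) = 0) (hr : 2 ≤ r) :
    (β * g) (p ^ r) = g (p ^ r) - 2 * g (p ^ (r - 1)) + g (p ^ (r - 2)) := by
  rw [conv_pp _ _ _ _ hp,
    ← Finset.sum_subset (Finset.range_subset_range.mpr (by omega : 3 ≤ r + 1))
      (fun i hi hni => by
        simp only [Finset.mem_range] at hi hni
        rw [hb3 i (by omega), zero_mul])]
  rw [Finset.sum_range_succ, Finset.sum_range_succ, Finset.sum_range_one]
  simp only [pow_zero, pow_one, h1, hb1, hb2, Nat.sub_zero]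
  ring

theorem conv1 (β g : ArithmeticFunction ℚ) (h1 : β 1 = 1) (p : ℕ) (hp : p.Prime)
    (hb1 : β p = -2) :
    (β * g) p = g p - 2 * g 1 := by
  have := conv_pp β g p 1 hp
  rw [pow_one] at this
  rw [this, Finset.sum_range_succ, Finset.sum_range_one]
  simp [h1, hb1]
  ring

/-- Let `β` be the multiplicative arithmetic function with `β(p) = -2`, `β(p^2) = 1`
and `β(p^r) = 0` for `r ≥ 3`, let `f` be a positive integer, and let
`ψ_f(n) := ψ(f·n)/ψ(f)`. Then for every prime `p`: if `p ∤ f` then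
`(β * ψ_f)(p) = p - 1`, `(β * ψ_f)(p²) = p² - p - 1`, and
`(β * ψ_f)(p^r) = p^r - p^{r-1} - p^{r-2} + p^{r-3}` for `r ≥ 3`; and if `p ∣ f` then
`(β * ψ_f)(p) = p - 2` and `(β * ψ_f)(p^r) = p^r - 2p^{r-1} + p^{r-2}` for `r ≥ 2`. -/
theorem beta_mul_psiSub_apply (β : ArithmeticFunction ℚ)
    (hβ : β.IsMultiplicative)
    (hβ1 : ∀ p : ℕ, p.Prime → β p = -2)
    (hβ2 : ∀ p : ℕ, p.Prime → β (p ^ 2) = 1)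
    (hβ3 : ∀ p r : ℕ, p.Prime → 3 ≤ r → β (p ^ r) = 0)
    (f : ℕ) (hf : 0 < f) :
    ∀ p : ℕ, p.Prime →
      (¬ p ∣ f →
        (β * psiSub f) p = (p : ℚ) - 1 ∧
        (β * psiSub f) (p ^ 2) = (p : ℚ) ^ 2 - (p : ℚ) - 1 ∧
        ∀ r : ℕ, 3 ≤ r →
          (β * psiSub f) (p ^ r)
            = (p : ℚ) ^ r - (p : ℚ) ^ (r - 1) - (p : ℚ) ^ (r - 2) + (p : ℚ) ^ (r - 3)) ∧
      (p ∣ f →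
        (β * psiSub f) p = (p : ℚ) - 2 ∧
        ∀ r : ℕ, 2 ≤ r →
          (β * psiSub f) (p ^ r)
            = (p : ℚ) ^ r - 2 * (p : ℚ) ^ (r - 1) + (p : ℚ) ^ (r - 2)) := by
  intro p hp
  have hp0 : (p : ℚ) ≠ 0 := by exact_mod_cast hp.pos.ne'
  have h1 : β 1 = 1 := hβ.map_one
  have hone := psiSub_one' f hf
  constructor
  · intro hd
    have g1 : ∀ k : ℕ, k ≠ 0 → psiSub f (p ^ k) = (p : ℚ) ^ k * (1 + 1 / p) :=
      fun k hk => psiSub_pp_not_dvd f hf p k hp hk hd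
    refine ⟨?_, ?_, ?_⟩
    · rw [conv1 β _ h1 p hp (hβ1 p hp), hone, ← pow_one p, g1 1 one_ne_zero]
      field_simp
      ring
    · rw [conv3 β _ h1 p 2 hp (hβ1 p hp) (hβ2 p hp) (fun i hi => hβ3 p i hp hi) le_rfl]
      norm_num
      rw [g1 2 (by norm_num), ← pow_one p, g1 1 one_ne_zero, hone]
      simp only [pow_one]
      field_simp
      ring
    · intro r hr
      obtain ⟨s, rfl⟩ : ∃ s, r = 3 + s := ⟨r - 3, by omega⟩
      rw [conv3 β _ h1 p _ hp (hβ1 p hp) (hβ2 p hp) (fun i hi => hβ3 p i hp hi) (by omega)]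
      have e1 : 3 + s - 1 = 2 + s := by omega
      have e2 : 3 + s - 2 = 1 + s := by omega
      have e3 : 3 + s - 3 = s := by omega
      rw [e1, e2, e3, g1 (3 + s) (by omega), g1 (2 + s) (by omega), g1 (1 + s) (by omega)]
      field_simp
      ring
  · intro hd
    have g1 : ∀ k : ℕ, k ≠ 0 → psiSub f (p ^ k) = (p : ℚ) ^ k :=
      fun k hk => psiSub_pp_dvd f hf p k hp hk hd
    refine ⟨?_, ?_⟩
    · rw [conv1 β _ h1 p hp (hβ1 p hp), hone, ← pow_one p, g1 1 one_ne_zero]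
      ring
    · intro r hr
      obtain ⟨s, rfl⟩ : ∃ s, r = 2 + s := ⟨r - 2, by omega⟩
      rw [conv3 β _ h1 p _ hp (hβ1 p hp) (hβ2 p hp) (fun i hi => hβ3 p i hp hi) (by omega)]
      have e1 : 2 + s - 1 = 1 + s := by omega
      have e2 : 2 + s - 2 = s := by omega
      rw [e1, e2, g1 (2 + s) (by omega)]
      rcases Nat.eq_zero_or_pos s with rfl | hs
      · rw [pow_zero, hone, g1 (1 + 0) (by omega)]
        ring
      · rw [g1 (1 + s) (by omega), g1 s (by omega)]
end

section
/- Let p be a prime and let r ≥ 1 and α ≥ 0 be integers with α ≤ r. Then the sum, over all divisors d of p^r such that gcd(d, p^r/d) divides p^{r−α}, of φ(gcd(d, p^r/d)) equals: 2·p^{r−α} if r < 2α; 2·p^{(r−1)/2} if r ≥ 2α and r is odd; and p^{r/2} + p^{r/2 − 1} if r ≥ 2α and r is even. -/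
open Finset

private lemma gcd_pp (p a b : ℕ) : Nat.gcd (p ^ a) (p ^ b) = p ^ min a b := by
  rcases le_total a b with h | h
  · rw [Nat.gcd_eq_left (pow_dvd_pow p h), min_eq_left h]
  · rw [Nat.gcd_eq_right (pow_dvd_pow p h), min_eq_right h]

private lemma sum_tot (p k : ℕ) (hp : p.Prime) :
    ∑ i ∈ range (k + 1), (p ^ i).totient = p ^ k := by
  rw [← Nat.sum_divisors_prime_pow hp]
  exact Nat.sum_totient _

private lemma sum_cut (p r β : ℕ) (hβ : β ≤ r) (hp : p.Prime) :
    ∑ i ∈ range (r + 1), (if i ≤ β then (p ^ i).totient else 0) = p ^ β := by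
  have hsub : ∑ i ∈ range (β + 1), (if i ≤ β then (p ^ i).totient else 0)
      = ∑ i ∈ range (r + 1), (if i ≤ β then (p ^ i).totient else 0) :=
    Finset.sum_subset (Finset.range_subset_range.2 (by omega))
      (fun x _ hx => if_neg (by simp at hx; omega))
  rw [← hsub, ← sum_tot p β hp]
  exact Finset.sum_congr rfl fun i hi => if_pos (by simp at hi; omega)

private lemma core (p r β : ℕ) (hp : p.Prime) (h : 2 * β < r) :
    ∑ i ∈ range (r + 1),
      (if min i (r - i) ≤ β then (p ^ min i (r - i)).totient else 0) = 2 * p ^ β := by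
  have key : ∀ i ∈ range (r + 1),
      (if min i (r - i) ≤ β then (p ^ min i (r - i)).totient else 0)
        = (if i ≤ β then (p ^ i).totient else 0)
          + (if r - i ≤ β then (p ^ (r - i)).totient else 0) := by
    intro i hi
    rw [mem_range] at hi
    rcases le_or_gt i β with h1 | h1
    · have h2 : min i (r - i) = i := min_eq_left (by omega)
      rw [h2, if_pos h1, if_neg (show ¬ (r - i ≤ β) by omega)]
      omega
    · rcases le_or_gt (r - i) β with h2 | h2
      · have h3 : min i (r - i) = r - i := min_eq_right (by omega)
        rw [h3, if_pos h2, if_neg (show ¬ (i ≤ β) by omega)]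
        omega
      · have h3 : ¬ min i (r - i) ≤ β := by
          rcases min_cases i (r - i) with ⟨hm, _⟩ | ⟨hm, _⟩ <;> omega
        rw [if_neg h3, if_neg (show ¬ (i ≤ β) by omega),
          if_neg (show ¬ (r - i ≤ β) by omega)]
  rw [Finset.sum_congr rfl key, Finset.sum_add_distrib]
  have hrefl : ∑ i ∈ range (r + 1), (if r - i ≤ β then (p ^ (r - i)).totient else 0)
      = ∑ i ∈ range (r + 1), (if i ≤ β then (p ^ i).totient else 0) := by
    have := Finset.sum_range_reflect (fun j => if j ≤ β then (p ^ j).totient else 0) (r + 1)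
    simpa using this
  rw [hrefl, sum_cut p r β (by omega) hp, two_mul]

/-- Let `p` be a prime and `1 ≤ r`, `0 ≤ α ≤ r`. Then
`∑_{d ∣ p^r, gcd(d, p^r/d) ∣ p^{r-α}} φ(gcd(d, p^r/d))` equals `2·p^{r-α}` if `r < 2α`;
`2·p^{(r-1)/2}` if `r ≥ 2α` and `r` is odd; and `p^{r/2} + p^{r/2-1}` if `r ≥ 2α` and
`r` is even. -/
theorem sigma_prime_pow (p : ℕ) (hp : p.Prime) (r α : ℕ) (hr : 1 ≤ r) (hαr : α ≤ r) :
    (r < 2 * α →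
      ∑ d ∈ (p ^ r).divisors.filter (fun d => Nat.gcd d (p ^ r / d) ∣ p ^ (r - α)),
          (Nat.gcd d (p ^ r / d)).totient = 2 * p ^ (r - α)) ∧
    (2 * α ≤ r → Odd r →
      ∑ d ∈ (p ^ r).divisors.filter (fun d => Nat.gcd d (p ^ r / d) ∣ p ^ (r - α)),
          (Nat.gcd d (p ^ r / d)).totient = 2 * p ^ ((r - 1) / 2)) ∧
    (2 * α ≤ r → Even r →
      ∑ d ∈ (p ^ r).divisors.filter (fun d => Nat.gcd d (p ^ r / d) ∣ p ^ (r - α)),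
          (Nat.gcd d (p ^ r / d)).totient = p ^ (r / 2) + p ^ (r / 2 - 1)) := by
  have main : ∑ d ∈ (p ^ r).divisors.filter (fun d => Nat.gcd d (p ^ r / d) ∣ p ^ (r - α)),
        (Nat.gcd d (p ^ r / d)).totient
      = ∑ i ∈ range (r + 1),
          (if min i (r - i) ≤ r - α then (p ^ min i (r - i)).totient else 0) := by
    rw [Finset.sum_filter, Nat.sum_divisors_prime_pow hp]
    refine Finset.sum_congr rfl fun i hi => ?_
    rw [mem_range] at hi
    have hdiv : p ^ r / p ^ i = p ^ (r - i) := Nat.pow_div (by omega) hp.pos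
    rw [hdiv, gcd_pp]
    simp only [Nat.pow_dvd_pow_iff_le_right hp.one_lt]
  refine ⟨fun h1 => ?_, fun h1 hodd => ?_, fun h1 heven => ?_⟩
  · rw [main, core p r (r - α) hp (by omega)]
  · obtain ⟨k, hk⟩ := hodd
    have hk' : (r - 1) / 2 = k := by omega
    rw [main, hk']
    have htrans : ∀ i ∈ range (r + 1),
        (if min i (r - i) ≤ r - α then (p ^ min i (r - i)).totient else 0)
          = (if min i (r - i) ≤ k then (p ^ min i (r - i)).totient else 0) := by
      intro i hi
      rw [mem_range] at hi
      have hm1 : min i (r - i) ≤ i := min_le_left _ _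
      have hm2 : min i (r - i) ≤ r - i := min_le_right _ _
      rw [if_pos (by omega), if_pos (by omega)]
    rw [Finset.sum_congr rfl htrans, core p r k hp (by omega)]
  · obtain ⟨k, hk⟩ := heven
    have hkr : r = 2 * k := by omega
    have hk1 : 1 ≤ k := by omega
    have hhalf : r / 2 = k := by omega
    rw [main, hhalf]
    have key : ∀ i ∈ range (r + 1),
        (if min i (r - i) ≤ r - α then (p ^ min i (r - i)).totient else 0)
          = (if i ≤ k - 1 then (p ^ i).totient else 0)
            + (if r - i ≤ k - 1 then (p ^ (r - i)).totient else 0)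
            + (if i = k then (p ^ k).totient else 0) := by
      intro i hi
      rw [mem_range] at hi
      have hm1 : min i (r - i) ≤ i := min_le_left _ _
      have hm2 : min i (r - i) ≤ r - i := min_le_right _ _
      rw [if_pos (by omega)]
      rcases lt_trichotomy i k with h2 | h2 | h2
      · have h3 : min i (r - i) = i := min_eq_left (by omega)
        rw [h3, if_pos (show i ≤ k - 1 by omega), if_neg (show ¬ (r - i ≤ k - 1) by omega),
          if_neg (show ¬ (i = k) by omega)]
        omega
      · have h3 : min i (r - i) = k := by subst h2; exact min_eq_left (by omega)
        rw [h3, if_neg (show ¬ (i ≤ k - 1) by omega),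
          if_neg (show ¬ (r - i ≤ k - 1) by omega), if_pos h2]
        omega
      · have h3 : min i (r - i) = r - i := min_eq_right (by omega)
        rw [h3, if_neg (show ¬ (i ≤ k - 1) by omega), if_pos (show r - i ≤ k - 1 by omega),
          if_neg (show ¬ (i = k) by omega)]
        omega
    rw [Finset.sum_congr rfl key, Finset.sum_add_distrib, Finset.sum_add_distrib]
    have hrefl : ∑ i ∈ range (r + 1), (if r - i ≤ k - 1 then (p ^ (r - i)).totient else 0)
        = ∑ i ∈ range (r + 1), (if i ≤ k - 1 then (p ^ i).totient else 0) := by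
      have := Finset.sum_range_reflect
        (fun j => if j ≤ k - 1 then (p ^ j).totient else 0) (r + 1)
      simpa using this
    have hdiag : ∑ i ∈ range (r + 1), (if i = k then (p ^ k).totient else 0)
        = (p ^ k).totient := by
      rw [Finset.sum_ite_eq' (range (r + 1)) k (fun _ => (p ^ k).totient),
        if_pos (by rw [mem_range]; omega)]
    rw [hrefl, hdiag, sum_cut p r (k - 1) (by omega) hp,
      Nat.totient_prime_pow hp (by omega)]
    have hpk : p ^ k = p ^ (k - 1) * p := by
      rw [← pow_succ]; congr 1; omega
    have hp2 : 2 ≤ p := hp.two_le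
    set a := p ^ (k - 1)
    have h2 : a * (p - 1) + a = a * p := by
      rw [← Nat.mul_succ]; congr 1; omega
    rw [hpk]
    linarith
end

section
/- Let β be the multiplicative arithmetic function determined by β(1) = 1 and, for every prime p, β(p) = −2, β(p^2) = 1, and β(p^r) = 0 for r ≥ 3, and let g be the arithmetic function g(n) = ∑_{d ∣ n} φ(gcd(d, n/d)). Then for every prime p and every r ≥ 1: (β * g)(p^r) = 0 if r is odd; (β * g)(p^2) = p − 2; and (β * g)(p^r) = p^{r/2} − 2p^{r/2 − 1} + p^{r/2 − 2} for every even r ≥ 4. -/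
open Finset

def sigmaPhi : ArithmeticFunction ℤ :=
  ⟨fun n => ∑ d ∈ n.divisors, ((Nat.gcd d (n / d)).totient : ℤ), by simp⟩

lemma gcd_pow_pow (p i j : ℕ) : Nat.gcd (p^i) (p^j) = p ^ min i j := by
  rcases le_total i j with h | h
  · rw [min_eq_left h, Nat.gcd_eq_left (pow_dvd_pow p h)]
  · rw [min_eq_right h, Nat.gcd_eq_right (pow_dvd_pow p h)]

lemma sum_totient_pow {p : ℕ} (hp : p.Prime) (m : ℕ) :
    ∑ i ∈ range (m+1), (((p^i).totient : ℤ)) = (p : ℤ) ^ m := by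
  induction m with
  | zero => simp
  | succ m ih =>
    rw [Finset.sum_range_succ, ih, Nat.totient_prime_pow hp (Nat.succ_pos m)]
    have : ((p ^ m * (p - 1) : ℕ) : ℤ) = (p:ℤ)^m * ((p:ℤ) - 1) := by
      push_cast [Nat.cast_sub hp.one_lt.le]; ring
    rw [show m.succ - 1 = m from rfl, this]; ring

lemma sigmaPhi_pow {p : ℕ} (hp : p.Prime) (k : ℕ) :
    sigmaPhi (p ^ k) = ∑ i ∈ range (k+1), (((p ^ min i (k - i)).totient : ℤ)) := by
  show ∑ d ∈ (p^k).divisors, ((Nat.gcd d (p^k / d)).totient : ℤ) = _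
  rw [Nat.sum_divisors_prime_pow hp]
  refine Finset.sum_congr rfl fun i hi => ?_
  rw [Finset.mem_range] at hi
  rw [Nat.pow_div (by omega) hp.pos, gcd_pow_pow]

lemma sigmaPhi_odd {p : ℕ} (hp : p.Prime) (m : ℕ) :
    sigmaPhi (p ^ (2*m+1)) = 2 * (p:ℤ)^m := by
  rw [sigmaPhi_pow hp, range_eq_Ico,
    ← Finset.sum_Ico_consecutive _ (Nat.zero_le (m+1)) (by omega : m+1 ≤ 2*m+1+1)]
  have h1 : ∑ i ∈ Ico 0 (m+1), ((p ^ min i (2*m+1 - i)).totient : ℤ) = (p:ℤ)^m := by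
    rw [← range_eq_Ico, ← sum_totient_pow hp m]
    exact Finset.sum_congr rfl fun i hi => by
      rw [Finset.mem_range] at hi
      rw [show min i (2*m+1 - i) = i from by omega]
  have h2 : ∑ i ∈ Ico (m+1) (2*m+1+1), ((p ^ min i (2*m+1 - i)).totient : ℤ) = (p:ℤ)^m := by
    rw [Finset.sum_Ico_eq_sum_range]
    have : ∀ j ∈ range (2*m+1+1 - (m+1)), ((p ^ min (m+1+j) (2*m+1 - (m+1+j))).totient : ℤ)
        = ((p ^ (m - j)).totient : ℤ) := fun j hj => by
      rw [Finset.mem_range] at hj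
      rw [show min (m+1+j) (2*m+1 - (m+1+j)) = m - j from by omega]
    rw [Finset.sum_congr rfl this, show 2*m+1+1 - (m+1) = m+1 from by omega]
    rw [← sum_totient_pow hp m, ← Finset.sum_range_reflect (fun j => ((p^j).totient : ℤ)) (m+1)]
    exact Finset.sum_congr rfl fun j hj => rfl
  rw [h1, h2]; ring

lemma sigmaPhi_even {p : ℕ} (hp : p.Prime) (m : ℕ) :
    sigmaPhi (p ^ (2*m+2)) = (p:ℤ)^(m+1) + (p:ℤ)^m := by
  rw [sigmaPhi_pow hp, range_eq_Ico,
    ← Finset.sum_Ico_consecutive _ (Nat.zero_le (m+1)) (by omega : m+1 ≤ 2*m+2+1)]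
  have h1 : ∑ i ∈ Ico 0 (m+1), ((p ^ min i (2*m+2 - i)).totient : ℤ) = (p:ℤ)^m := by
    rw [← range_eq_Ico, ← sum_totient_pow hp m]
    exact Finset.sum_congr rfl fun i hi => by
      rw [Finset.mem_range] at hi; rw [show min i (2*m+2 - i) = i from by omega]
  have h2 : ∑ i ∈ Ico (m+1) (2*m+2+1), ((p ^ min i (2*m+2 - i)).totient : ℤ) = (p:ℤ)^(m+1) := by
    rw [Finset.sum_Ico_eq_sum_range]
    have : ∀ j ∈ range (2*m+2+1 - (m+1)), ((p ^ min (m+1+j) (2*m+2 - (m+1+j))).totient : ℤ)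
        = ((p ^ (m+1 - j)).totient : ℤ) := fun j hj => by
      rw [Finset.mem_range] at hj
      rw [show min (m+1+j) (2*m+2 - (m+1+j)) = m+1 - j from by omega]
    rw [Finset.sum_congr rfl this, show 2*m+2+1 - (m+1) = m+2 from by omega]
    rw [← sum_totient_pow hp (m+1),
      ← Finset.sum_range_reflect (fun j => ((p^j).totient : ℤ)) (m+2)]
    exact Finset.sum_congr rfl fun j hj => rfl
  rw [h1, h2]; ring

lemma conv_eq (β : ArithmeticFunction ℤ) (hβ : β.IsMultiplicative)
    (hβ1 : ∀ p : ℕ, p.Prime → β p = -2)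
    (hβ2 : ∀ p : ℕ, p.Prime → β (p ^ 2) = 1)
    (hβ3 : ∀ p r : ℕ, p.Prime → 3 ≤ r → β (p ^ r) = 0)
    {p : ℕ} (hp : p.Prime) (r : ℕ) (hr : 2 ≤ r) :
    (β * sigmaPhi) (p ^ r)
      = sigmaPhi (p^r) - 2 * sigmaPhi (p^(r-1)) + sigmaPhi (p^(r-2)) := by
  rw [ArithmeticFunction.mul_apply,
    Nat.sum_divisorsAntidiagonal (fun d e => β d * sigmaPhi e),
    Nat.sum_divisors_prime_pow hp]
  have step : ∀ i ∈ range (r+1), β (p^i) * sigmaPhi (p^r / p^i)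
      = β (p^i) * sigmaPhi (p^(r-i)) := fun i hi => by
    rw [Finset.mem_range] at hi
    rw [Nat.pow_div (by omega) hp.pos]
  rw [Finset.sum_congr rfl step,
    ← Finset.sum_subset (Finset.range_subset_range.mpr (by omega : 3 ≤ r+1))
      (fun x hx hnx => by
        rw [Finset.mem_range] at hnx
        rw [hβ3 p x hp (by omega), zero_mul])]
  rw [Finset.sum_range_succ, Finset.sum_range_succ, Finset.sum_range_succ,
    Finset.sum_range_zero, pow_zero, pow_one, hβ.map_one, hβ1 p hp, hβ2 p hp,
    Nat.sub_zero]
  ring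

/-- Let `β` be the multiplicative arithmetic function with `β(p) = -2`, `β(p^2) = 1`
and `β(p^r) = 0` for `r ≥ 3`, and let `g(n) = ∑_{d ∣ n} φ(gcd(d, n/d))`. Then for
every prime `p`: `(β * g)(p^r) = 0` for odd `r ≥ 1`; `(β * g)(p^2) = p - 2`; and
`(β * g)(p^r) = p^{r/2} - 2p^{r/2-1} + p^{r/2-2}` for even `r ≥ 4`. -/
theorem beta_mul_sigmaPhi_apply (β : ArithmeticFunction ℤ)
    (hβ : β.IsMultiplicative)
    (hβ1 : ∀ p : ℕ, p.Prime → β p = -2)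
    (hβ2 : ∀ p : ℕ, p.Prime → β (p ^ 2) = 1)
    (hβ3 : ∀ p r : ℕ, p.Prime → 3 ≤ r → β (p ^ r) = 0) :
    ∀ p : ℕ, p.Prime →
      (∀ r : ℕ, 1 ≤ r → Odd r → (β * sigmaPhi) (p ^ r) = 0) ∧
      (β * sigmaPhi) (p ^ 2) = (p : ℤ) - 2 ∧
      (∀ r : ℕ, 4 ≤ r → Even r →
        (β * sigmaPhi) (p ^ r)
          = (p : ℤ) ^ (r / 2) - 2 * (p : ℤ) ^ (r / 2 - 1) + (p : ℤ) ^ (r / 2 - 2)) := by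
  intro p hp
  have hsig1 : sigmaPhi (p ^ 0) = 1 := by
    rw [sigmaPhi_pow hp]; simp
  refine ⟨?_, ?_, ?_⟩
  · intro r hr hodd
    obtain ⟨m, rfl⟩ := hodd
    match m with
    | 0 =>
      rw [show 2*0+1 = 2*0+1 from rfl, ArithmeticFunction.mul_apply,
        Nat.sum_divisorsAntidiagonal (fun d e => β d * sigmaPhi e)]
      simp only [mul_zero, zero_add, pow_one]
      rw [show (p:ℕ).divisors = {1, p} from Nat.Prime.divisors hp]
      rw [Finset.sum_insert (by simp [hp.ne_one, Ne, Eq.comm]),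
        Finset.sum_singleton]
      have : sigmaPhi p = 2 := by
        have := sigmaPhi_odd hp 0
        simpa using this
      rw [Nat.div_one, Nat.div_self hp.pos, hβ.map_one, hβ1 p hp, this]
      have : sigmaPhi 1 = 1 := by simpa using hsig1
      rw [this]; norm_num
    | Nat.succ k =>
      rw [conv_eq β hβ hβ1 hβ2 hβ3 hp _ (by omega)]
      rw [show 2*(k+1)+1-1 = 2*k+2 from by omega, show 2*(k+1)+1-2 = 2*k+1 from by omega,
        sigmaPhi_odd hp (k+1), sigmaPhi_even hp k, sigmaPhi_odd hp k]
      ring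
  · rw [conv_eq β hβ hβ1 hβ2 hβ3 hp 2 le_rfl,
      show (2:ℕ)-1 = 1 from rfl, show (2:ℕ)-2 = 0 from rfl,
      show p^2 = p^(2*0+2) from rfl, sigmaPhi_even hp 0,
      show p^1 = p^(2*0+1) from rfl, sigmaPhi_odd hp 0, hsig1]
    ring
  · intro r hr heven
    obtain ⟨m, rfl⟩ := heven
    obtain ⟨k, rfl⟩ : ∃ k, m = k + 2 := ⟨m - 2, by omega⟩
    rw [conv_eq β hβ hβ1 hβ2 hβ3 hp _ (by omega)]
    rw [show (k+2)+(k+2) = 2*(k+1)+2 from by ring,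
      show 2*(k+1)+2-1 = 2*(k+1)+1 from by omega,
      show 2*(k+1)+2-2 = 2*k+2 from by omega,
      sigmaPhi_even hp (k+1), sigmaPhi_odd hp (k+1), sigmaPhi_even hp k,
      show (2*(k+1)+2)/2 = k+2 from by omega,
      show k+2-1 = k+1 from by omega, show k+2-2 = k from by omega]
    ring
end
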